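/- Logarithmic static regret for strongly convex costs: let f_t : ℝⁿ → ℝ (t = 1,…,T) be differentiable, μ-strongly convex, with |∇f_t(x_t)| ≤ G along the iterates. If x_{t+1} = x_t − (1/(μt)) ∇f_t(x_t) and x* minimizes ∑_{t=1}^T f_t, then ∑_{t=1}^T (f_t(x_t) − f_t(x*)) ≤ (G²/(2μ))(1 + log T). -/

import Mathlib

open scoped RealInnerProductSpace

theorem stmt_6 (n : ℕ) (T : ℕ) (hT : 1 ≤ T)
    (f : ℕ → EuclideanSpace ℝ (Fin n) → ℝ) (μ G : ℝ) (hμ : 0 < μ) (hG : 0 < G)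
    (x : ℕ → EuclideanSpace ℝ (Fin n)) (xstar : EuclideanSpace ℝ (Fin n))
    (hdiff : ∀ t, Differentiable ℝ (f t))
    (hsc : ∀ t, ∀ u v : EuclideanSpace ℝ (Fin n),
      f t v ≥ f t u + ⟪gradient (f t) u, v - u⟫ + μ / 2 * ‖v - u‖ ^ 2)
    (hgrad : ∀ t ∈ Finset.Icc 1 T, ‖gradient (f t) (x t)‖ ≤ G)
    (hstep : ∀ t ∈ Finset.Icc 1 T,
      x (t + 1) = x t - (1 / (μ * t)) • gradient (f t) (x t))
    (hmin : ∀ y : EuclideanSpace ℝ (Fin n),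
      ∑ t ∈ Finset.Icc 1 T, f t xstar ≤ ∑ t ∈ Finset.Icc 1 T, f t y) :
    ∑ t ∈ Finset.Icc 1 T, (f t (x t) - f t xstar) ≤
      G ^ 2 / (2 * μ) * (1 + Real.log T) := by
  set a : ℕ → ℝ := fun t => ‖x t - xstar‖ ^ 2 with ha
  have ha_nonneg : ∀ t, 0 ≤ a t := fun t => by positivity
  -- per-step bound
  have step : ∀ t ∈ Finset.Icc 1 T,
      f t (x t) - f t xstar ≤
        μ / 2 * ((t : ℝ) * (a t - a (t + 1)) - a t) + G ^ 2 / (2 * μ) * (1 / t) := by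
    intro t ht
    obtain ⟨ht1, htT⟩ := Finset.mem_Icc.mp ht
    have htpos : (0 : ℝ) < t := by exact_mod_cast ht1
    set g := gradient (f t) (x t) with hg
    set η : ℝ := 1 / (μ * t) with hη
    have hηpos : 0 < η := by positivity
    -- expand a (t+1)
    have hexp : a (t + 1) = a t - 2 * η * ⟪x t - xstar, g⟫ + η ^ 2 * ‖g‖ ^ 2 := by
      have hx : x (t + 1) - xstar = (x t - xstar) - η • g := by
        rw [hstep t ht]; abel
      rw [ha]
      simp only [hx]
      rw [norm_sub_sq_real, real_inner_smul_right, norm_smul]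
      simp [abs_of_pos hηpos, mul_pow]
      ring
    have hinner : ⟪g, x t - xstar⟫ = (a t - a (t + 1)) / (2 * η) + η / 2 * ‖g‖ ^ 2 := by
      rw [real_inner_comm]
      field_simp [hexp]
      rw [hexp]; ring
    have hsc' := hsc t (x t) xstar
    have h1 : f t (x t) - f t xstar ≤ ⟪g, x t - xstar⟫ - μ / 2 * a t := by
      have : ⟪g, xstar - x t⟫ = -⟪g, x t - xstar⟫ := by
        rw [← inner_neg_right]; congr 1; abel
      have hnorm : ‖xstar - x t‖ = ‖x t - xstar‖ := norm_sub_rev _ _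
      rw [ge_iff_le, this, hnorm] at hsc'
      rw [ha]
      linarith
    have hG2 : ‖g‖ ^ 2 ≤ G ^ 2 := by
      have := hgrad t ht
      nlinarith [norm_nonneg g]
    have hηval : (a t - a (t + 1)) / (2 * η) = μ * t / 2 * (a t - a (t + 1)) := by
      rw [hη]; field_simp
    have hη2 : η / 2 * ‖g‖ ^ 2 ≤ G ^ 2 / (2 * μ) * (1 / t) := by
      calc η / 2 * ‖g‖ ^ 2 ≤ η / 2 * G ^ 2 := by
            exact mul_le_mul_of_nonneg_left hG2 (by positivity)
        _ = G ^ 2 / (2 * μ) * (1 / t) := by rw [hη]; field_simp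
    calc f t (x t) - f t xstar ≤ ⟪g, x t - xstar⟫ - μ / 2 * a t := h1
      _ = (a t - a (t + 1)) / (2 * η) + η / 2 * ‖g‖ ^ 2 - μ / 2 * a t := by rw [hinner]
      _ ≤ μ * t / 2 * (a t - a (t + 1)) - μ / 2 * a t + G ^ 2 / (2 * μ) * (1 / t) := by
          rw [hηval] at *; linarith
      _ = μ / 2 * ((t : ℝ) * (a t - a (t + 1)) - a t) + G ^ 2 / (2 * μ) * (1 / t) := by ring
  -- sum the per-step bounds
  have hsum := Finset.sum_le_sum step
  -- telescoping part
  have htel : ∑ t ∈ Finset.Icc 1 T, ((t : ℝ) * (a t - a (t + 1)) - a t) ≤ 0 := by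
    have key : ∑ t ∈ Finset.Icc 1 T, ((t : ℝ) * (a t - a (t + 1)) - a t)
        = -(T : ℝ) * a (T + 1) := by
      have hts := Finset.sum_range_sub' (fun i => (i : ℝ) * a (i + 1)) T
      simp only [Nat.cast_zero, zero_mul, zero_sub] at hts
      rw [show Finset.Icc 1 T = Finset.Ico 1 (T + 1) from by rw [Finset.Ico_add_one_right_eq_Icc],
        Finset.sum_Ico_eq_sum_range]
      simp only [Nat.add_sub_cancel]
      rw [neg_mul, ← hts]
      apply Finset.sum_congr rfl
      intro i _
      rw [Nat.add_comm 1 i]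
      push_cast
      ring
    rw [key]
    have := ha_nonneg (T + 1)
    have : (0:ℝ) ≤ T := by positivity
    nlinarith [ha_nonneg (T + 1)]
  -- harmonic part
  have hharm : ∑ t ∈ Finset.Icc 1 T, (1 / (t : ℝ)) ≤ 1 + Real.log T := by
    have h1 : ∑ t ∈ Finset.Icc 1 T, (1 / (t : ℝ)) = ((harmonic T : ℚ) : ℝ) := by
      rw [harmonic_eq_sum_Icc]
      push_cast
      simp [one_div]
    rw [h1]
    exact harmonic_le_one_add_log T
  have hconst : (0 : ℝ) ≤ G ^ 2 / (2 * μ) := by positivity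
  calc ∑ t ∈ Finset.Icc 1 T, (f t (x t) - f t xstar)
      ≤ ∑ t ∈ Finset.Icc 1 T,
          (μ / 2 * ((t : ℝ) * (a t - a (t + 1)) - a t) + G ^ 2 / (2 * μ) * (1 / t)) := hsum
    _ = μ / 2 * (∑ t ∈ Finset.Icc 1 T, ((t : ℝ) * (a t - a (t + 1)) - a t))
          + G ^ 2 / (2 * μ) * ∑ t ∈ Finset.Icc 1 T, (1 / (t : ℝ)) := by
        rw [Finset.sum_add_distrib, ← Finset.mul_sum, ← Finset.mul_sum]
    _ ≤ 0 + G ^ 2 / (2 * μ) * (1 + Real.log T) := by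
        have h0 : μ / 2 * (∑ t ∈ Finset.Icc 1 T, ((t : ℝ) * (a t - a (t + 1)) - a t)) ≤ 0 :=
          mul_nonpos_of_nonneg_of_nonpos (by positivity) htel
        have h2 := mul_le_mul_of_nonneg_left hharm hconst
        linarith
    _ = G ^ 2 / (2 * μ) * (1 + Real.log T) := by ring
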